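/- Let W and U be unitaries on H ⊗ H such that W satisfies the pentagon equation W₁₂W₁₃W₂₃ = W₂₃W₁₂, U satisfies the pentagon equation U₁₂U₁₃U₂₃ = U₂₃U₁₂, and W₁₂* U₂₃ W₁₂ = U₁₃ U₂₃. Setting F := W U*, the unitary F satisfies F₂₃ F₁₂ F₂₃* = W₂₃ F₁₂ W₂₃*. -/
import Mathlib


/-- Lemma 4.2 (lemDDD), operator-algebraic core.  `B` models `B(H ⊗ H)` and `A`
models `B(H ⊗ H ⊗ H)` with the standard leg embeddings `e12, e13, e23`.  If `W`
and `U` are multiplicative unitaries with `W₁₂* U₂₃ W₁₂ = U₁₃ U₂₃`, then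
`F := W U*` satisfies `F₂₃ F₁₂ F₂₃* = W₂₃ F₁₂ W₂₃*`. -/
theorem stmt4 {B A : Type*} [Ring B] [StarRing B] [Ring A] [StarRing A]
    (e12 e13 e23 : B →+* A)
    (he12 : ∀ x, e12 (star x) = star (e12 x))
    (he13 : ∀ x, e13 (star x) = star (e13 x))
    (he23 : ∀ x, e23 (star x) = star (e23 x))
    (W U : B)
    (hWunitary : star W * W = 1 ∧ W * star W = 1)
    (hUunitary : star U * U = 1 ∧ U * star U = 1)
    (pentagonW : e12 W * e13 W * e23 W = e23 W * e12 W)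
    (pentagonU : e12 U * e13 U * e23 U = e23 U * e12 U)
    (hbichar : star (e12 W) * e23 U * e12 W = e13 U * e23 U) :
    e23 (W * star U) * e12 (W * star U) * star (e23 (W * star U))
      = e23 W * e12 (W * star U) * star (e23 W) := by
  obtain ⟨hW1, hW2⟩ := hWunitary
  obtain ⟨hU1, hU2⟩ := hUunitary
  have h12W2 : e12 W * star (e12 W) = 1 := by rw [← he12, ← map_mul, hW2, map_one]
  have h12U1 : star (e12 U) * e12 U = 1 := by rw [← he12, ← map_mul, hU1, map_one]
  have h12U2 : e12 U * star (e12 U) = 1 := by rw [← he12, ← map_mul, hU2, map_one]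
  have h23U1 : star (e23 U) * e23 U = 1 := by rw [← he23, ← map_mul, hU1, map_one]
  have hb : e23 U * e12 W = e12 W * (e13 U * e23 U) := by
    calc e23 U * e12 W = e12 W * star (e12 W) * e23 U * e12 W := by rw [h12W2, one_mul]
    _ = e12 W * (star (e12 W) * e23 U * e12 W) := by noncomm_ring
    _ = e12 W * (e13 U * e23 U) := by rw [hbichar]
  have hp : e13 U * e23 U = star (e12 U) * (e23 U * e12 U) := by
    calc e13 U * e23 U = star (e12 U) * e12 U * (e13 U * e23 U) := by rw [h12U1, one_mul]
    _ = star (e12 U) * (e12 U * e13 U * e23 U) := by noncomm_ring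
    _ = star (e12 U) * (e23 U * e12 U) := by rw [pentagonU]
  set X := e12 W * star (e12 U) with hX
  have hcomm : e23 U * X = X * e23 U := by
    calc e23 U * X = e23 U * e12 W * star (e12 U) := by rw [hX]; noncomm_ring
    _ = e12 W * (star (e12 U) * (e23 U * e12 U)) * star (e12 U) := by rw [hb, hp]
    _ = e12 W * star (e12 U) * e23 U * (e12 U * star (e12 U)) := by noncomm_ring
    _ = X * e23 U := by rw [h12U2, hX]; noncomm_ring
  have hX' : e12 (W * star U) = X := by rw [map_mul, he12, hX]
  have h23 : e23 (W * star U) = e23 W * star (e23 U) := by rw [map_mul, he23]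
  rw [hX', h23, star_mul, star_star]
  calc e23 W * star (e23 U) * X * (e23 U * star (e23 W))
      = e23 W * (star (e23 U) * (X * e23 U)) * star (e23 W) := by noncomm_ring
    _ = e23 W * (star (e23 U) * e23 U * X) * star (e23 W) := by rw [← hcomm]; noncomm_ring
    _ = e23 W * X * star (e23 W) := by rw [h23U1, one_mul]
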